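/- Suppose Q : ℝⁿ → Matrix (Fin m) (Fin m) ℝ is a conservative Q-matrix field admitting a family of invariant distributions μ^x, uniformly exponentially ergodic with constants C₀, λ, and let F : ℝⁿ × Fin m → ℝⁿ satisfy the central condition with ‖F(x,·)‖_∞ < ∞ for all x. Then there is a constant C > 0, depending only on C₀ and λ, such that the Poisson-equation solution Φ(x,i) := ∫₀^∞ (P^x_t F(x,·))(i) dt satisfies, for all x, y ∈ ℝⁿ: ‖Φ(x,·) − Φ(y,·)‖_∞ ≤ C · ( ‖F(x,·)‖_∞ · ‖Q(x) − Q(y)‖_ℓ + ‖F(x,·) − F(y,·)‖_∞ ). -/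

import Mathlib

open MeasureTheory

noncomputable section

/-- ℓ-norm of a matrix: `‖M‖_ℓ = max_i Σⱼ |M i j|`. -/
def lnorm {m : ℕ} (M : Matrix (Fin m) (Fin m) ℝ) : ℝ := ⨆ i, ∑ j, |M i j|

/-- Solution `Φ(x,i) := ∫₀^∞ (P^x_t F(x,·))(i) dt` of the Poisson equation,
defined by componentwise Bochner integration. -/
def poissonSol {n m : ℕ} (Q : EuclideanSpace ℝ (Fin n) → Matrix (Fin m) (Fin m) ℝ)
    (F : EuclideanSpace ℝ (Fin n) → Fin m → EuclideanSpace ℝ (Fin n))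
    (x : EuclideanSpace ℝ (Fin n)) (i : Fin m) : EuclideanSpace ℝ (Fin n) :=
  WithLp.toLp 2 (fun l => ∫ t in Set.Ici (0:ℝ), (NormedSpace.exp (t • Q x)).mulVec (fun j => F x j l) i)

section PoissonAux

open NormedSpace Matrix

attribute [local instance] Matrix.linftyOpNormedAddCommGroup Matrix.linftyOpNormedRing
  Matrix.linftyOpNormedAlgebra Matrix.linftyOpNormedSpace

variable {m : ℕ}

lemma lnorm_nonneg (M : Matrix (Fin m) (Fin m) ℝ) : 0 ≤ lnorm M := by
  unfold lnorm
  exact Real.iSup_nonneg fun i => Finset.sum_nonneg fun j _ => abs_nonneg _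

lemma row_abs_sum_le_lnorm (M : Matrix (Fin m) (Fin m) ℝ) (i : Fin m) :
    ∑ j, |M i j| ≤ lnorm M := by
  unfold lnorm
  exact le_ciSup (f := fun i : Fin m => ∑ j, |M i j|)
    (Set.Finite.bddAbove (Set.finite_range _)) i

lemma lnorm_le (M : Matrix (Fin m) (Fin m) ℝ) {c : ℝ} (h0 : 0 ≤ c)
    (h : ∀ i, ∑ j, |M i j| ≤ c) : lnorm M ≤ c := by
  unfold lnorm
  exact Real.iSup_le h h0

lemma row_abs_sum_le_norm (A : Matrix (Fin m) (Fin m) ℝ) (i : Fin m) : ∑ j, |A i j| ≤ ‖A‖ := by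
  rw [Matrix.linfty_opNorm_def]
  have h := Finset.le_sup (f := fun i : Fin m => ∑ j, ‖A i j‖₊) (Finset.mem_univ i)
  calc ∑ j, |A i j| = ((∑ j, ‖A i j‖₊ : NNReal) : ℝ) := by
        push_cast; simp [Real.norm_eq_abs]
    _ ≤ _ := by exact_mod_cast h

lemma lnorm_eq_norm (M : Matrix (Fin m) (Fin m) ℝ) : lnorm M = ‖M‖ := by
  refine le_antisymm (Real.iSup_le (fun i => row_abs_sum_le_norm M i) (norm_nonneg M)) ?_
  rw [Matrix.linfty_opNorm_def]
  have h : (Finset.univ.sup fun i : Fin m => ∑ j, ‖M i j‖₊) ≤ ⟨lnorm M, lnorm_nonneg M⟩ := by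
    refine Finset.sup_le fun i _ => ?_
    apply NNReal.coe_le_coe.1
    push_cast
    exact row_abs_sum_le_lnorm M i
  exact_mod_cast h

lemma lnorm_mul_le (M N : Matrix (Fin m) (Fin m) ℝ) : lnorm (M * N) ≤ lnorm M * lnorm N := by
  simp only [lnorm_eq_norm]; exact norm_mul_le M N

lemma lnorm_add_le (M N : Matrix (Fin m) (Fin m) ℝ) : lnorm (M + N) ≤ lnorm M + lnorm N := by
  simp only [lnorm_eq_norm]; exact norm_add_le M N

lemma lnorm_sub_le (M N : Matrix (Fin m) (Fin m) ℝ) : lnorm (M - N) ≤ lnorm M + lnorm N := by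
  simp only [lnorm_eq_norm]; exact norm_sub_le M N

lemma lnorm_neg (M : Matrix (Fin m) (Fin m) ℝ) : lnorm (-M) = lnorm M := by
  simp only [lnorm_eq_norm]; exact norm_neg M

lemma lnorm_sub_sub (A B C D : Matrix (Fin m) (Fin m) ℝ) :
    lnorm ((A - B) - (C - D)) ≤ lnorm (A - C) + lnorm (B - D) := by
  have h : (A - B) - (C - D) = (A - C) - (B - D) := by abel
  rw [h]; exact lnorm_sub_le _ _

lemma exp_entry_continuous (A : Matrix (Fin m) (Fin m) ℝ) (i j : Fin m) :
    Continuous fun t : ℝ => exp (t • A) i j := by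
  have h : Continuous fun t : ℝ => exp (t • A) :=
    exp_continuous.comp (continuous_id.smul continuous_const)
  let e : Matrix (Fin m) (Fin m) ℝ →ₗ[ℝ] ℝ :=
    { toFun := fun M => M i j, map_add' := fun _ _ => rfl, map_smul' := fun _ _ => rfl }
  exact e.continuous_of_finiteDimensional.comp h

lemma exp_mulVec_eq {M : Matrix (Fin m) (Fin m) ℝ} {v : Fin m → ℝ}
    (h : M.mulVec v = 0) : (exp M).mulVec v = v := by
  let L : Matrix (Fin m) (Fin m) ℝ →ₗ[ℝ] (Fin m → ℝ) :=
    { toFun := fun N => N.mulVec v,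
      map_add' := fun N₁ N₂ => by simp [Matrix.add_mulVec],
      map_smul' := fun c N => by simp [Matrix.smul_mulVec] }
  let L' : Matrix (Fin m) (Fin m) ℝ →L[ℝ] (Fin m → ℝ) :=
    ⟨L, L.continuous_of_finiteDimensional⟩
  have hs : Summable fun n : ℕ => ((Nat.factorial n : ℝ)⁻¹) • M ^ n := expSeries_summable' M
  have key : (exp M).mulVec v = ∑' n : ℕ, ((Nat.factorial n : ℝ)⁻¹) • (M ^ n).mulVec v := by
    rw [exp_eq_tsum (𝕂 := ℝ)]
    have := L'.map_tsum hs
    simpa [L', L] using this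
  rw [key, tsum_eq_single 0]
  · simp [Matrix.one_mulVec]
  · intro n hn
    obtain ⟨k, rfl⟩ := Nat.exists_eq_succ_of_ne_zero hn
    rw [pow_succ, ← Matrix.mulVec_mulVec, h, Matrix.mulVec_zero, smul_zero]

lemma exp_vecMul_eq {M : Matrix (Fin m) (Fin m) ℝ} {v : Fin m → ℝ}
    (h : v ᵥ* M = 0) : v ᵥ* exp M = v := by
  let L : Matrix (Fin m) (Fin m) ℝ →ₗ[ℝ] (Fin m → ℝ) :=
    { toFun := fun N => v ᵥ* N,
      map_add' := fun N₁ N₂ => by simp [Matrix.vecMul_add],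
      map_smul' := fun c N => by
        ext j
        simp only [Matrix.vecMul, dotProduct, Matrix.smul_apply, Pi.smul_apply,
          RingHom.id_apply, smul_eq_mul, Finset.mul_sum]
        exact Finset.sum_congr rfl fun i _ => by ring }
  let L' : Matrix (Fin m) (Fin m) ℝ →L[ℝ] (Fin m → ℝ) :=
    ⟨L, L.continuous_of_finiteDimensional⟩
  have hs : Summable fun n : ℕ => ((Nat.factorial n : ℝ)⁻¹) • M ^ n := expSeries_summable' M
  have key : v ᵥ* (exp M) = ∑' n : ℕ, ((Nat.factorial n : ℝ)⁻¹) • (v ᵥ* M ^ n) := by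
    rw [exp_eq_tsum (𝕂 := ℝ)]
    have := L'.map_tsum hs
    simpa [L', L] using this
  rw [key, tsum_eq_single 0]
  · simp [Matrix.vecMul_one]
  · intro n hn
    obtain ⟨k, rfl⟩ := Nat.exists_eq_succ_of_ne_zero hn
    rw [pow_succ', ← Matrix.vecMul_vecMul, h, Matrix.zero_vecMul, smul_zero]

lemma duhamel_eq (A B : Matrix (Fin m) (Fin m) ℝ) (t : ℝ) :
    exp (t • A) - exp (t • B)
      = ∫ s in (0:ℝ)..t, exp (s • A) * (A - B) * exp ((t - s) • B) := by
  have key : ∀ s : ℝ, HasDerivAt (fun u : ℝ => exp (u • A) * exp ((t - u) • B))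
      (exp (s • A) * (A - B) * exp ((t - s) • B)) s := by
    intro s
    have h1 : HasDerivAt (fun u : ℝ => exp (u • A)) (exp (s • A) * A) s :=
      hasDerivAt_exp_smul_const A s
    have h3 : HasDerivAt (fun u : ℝ => exp (u • B)) (B * exp ((t - s) • B)) (t - s) :=
      hasDerivAt_exp_smul_const' B (t - s)
    have h4 : HasDerivAt (fun u : ℝ => t - u) (-1 : ℝ) s := by
      simpa using (hasDerivAt_id s).const_sub t
    have h2 : HasDerivAt (fun u : ℝ => exp ((t - u) • B)) (-(B * exp ((t - s) • B))) s := by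
      have := h3.scomp s h4
      convert this using 1 <;> first | rfl | simp
    have h5 := h1.mul h2
    convert h5 using 1 <;> first | rfl | noncomm_ring
  have c1 : Continuous fun s : ℝ => exp (s • A) :=
    exp_continuous.comp (continuous_id.smul continuous_const)
  have c2 : Continuous fun s : ℝ => exp ((t - s) • B) :=
    exp_continuous.comp ((continuous_const.sub continuous_id).smul continuous_const)
  have hcont : Continuous fun s : ℝ => exp (s • A) * (A - B) * exp ((t - s) • B) :=
    (c1.mul continuous_const).mul c2
  have heq := intervalIntegral.integral_eq_sub_of_hasDerivAt (fun s _ => key s)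
    (hcont.intervalIntegrable 0 t)
  rw [heq]
  simp [sub_self, zero_smul, exp_zero]

lemma integral_exp_kernel {lam : ℝ} (hlam : 0 < lam) (t : ℝ) :
    ∫ s in (0:ℝ)..t, Real.exp (-lam * (t - s)) ≤ 1 / lam := by
  have key : ∀ s : ℝ, HasDerivAt (fun u : ℝ => Real.exp (-lam * (t - u)) / lam)
      (Real.exp (-lam * (t - s))) s := by
    intro s
    have h0 : (fun u : ℝ => -lam * (t - u)) = fun u : ℝ => lam * u - lam * t := by
      funext u; ring
    have h1 : HasDerivAt (fun u : ℝ => -lam * (t - u)) lam s := by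
      rw [h0]
      simpa using ((hasDerivAt_id s).const_mul lam).sub_const (lam * t)
    have h2 := (Real.hasDerivAt_exp (-lam * (t - s))).comp s h1
    have h3 := h2.div_const lam
    convert h3 using 1 <;> first | rfl | rw [mul_div_assoc, div_self hlam.ne', mul_one]
  have hcont : Continuous fun s : ℝ => Real.exp (-lam * (t - s)) := by continuity
  have heq := intervalIntegral.integral_eq_sub_of_hasDerivAt (fun s _ => key s)
    (hcont.intervalIntegrable 0 t)
  rw [heq]
  have hp : 0 ≤ Real.exp (-lam * (t - 0)) / lam :=
    div_nonneg (Real.exp_nonneg _) hlam.le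
  have hq : Real.exp (-lam * (t - t)) / lam = 1 / lam := by simp
  linarith

lemma duhamel_bound (A B P2 : Matrix (Fin m) (Fin m) ℝ) (C₀ lam : ℝ)
    (hC₀ : 0 < C₀) (hlam : 0 < lam)
    (hA : ∀ s : ℝ, 0 ≤ s → lnorm (exp (s • A)) ≤ 1 + C₀)
    (hB : ∀ s : ℝ, 0 ≤ s → lnorm (exp (s • B) - P2) ≤ C₀ * Real.exp (-lam * s))
    (hABP : (A - B) * P2 = 0)
    (t : ℝ) (ht : 0 ≤ t) :
    lnorm (exp (t • A) - exp (t • B)) ≤ (1 + C₀) * C₀ / lam * lnorm (A - B) := by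
  simp only [lnorm_eq_norm] at hA hB ⊢
  set c : ℝ := (1 + C₀) * (‖A - B‖ * C₀) with hc
  have hc0 : 0 ≤ c := by positivity
  have c1 : Continuous fun s : ℝ => exp (s • A) :=
    exp_continuous.comp (continuous_id.smul continuous_const)
  have c2 : Continuous fun s : ℝ => exp ((t - s) • B) :=
    exp_continuous.comp ((continuous_const.sub continuous_id).smul continuous_const)
  have hcont : Continuous fun s : ℝ => exp (s • A) * (A - B) * exp ((t - s) • B) :=
    (c1.mul continuous_const).mul c2
  have hbd : ∀ s ∈ Set.Icc (0:ℝ) t,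
      ‖exp (s • A) * (A - B) * exp ((t - s) • B)‖ ≤ c * Real.exp (-lam * (t - s)) := by
    intro s hs
    have hfs : exp (s • A) * (A - B) * exp ((t - s) • B)
        = exp (s • A) * ((A - B) * (exp ((t - s) • B) - P2)) := by
      rw [mul_sub (A - B), hABP, sub_zero, mul_assoc]
    rw [hfs]
    calc ‖exp (s • A) * ((A - B) * (exp ((t - s) • B) - P2))‖
        ≤ ‖exp (s • A)‖ * (‖A - B‖ * ‖exp ((t - s) • B) - P2‖) :=
          (norm_mul_le _ _).trans (by gcongr; exact norm_mul_le _ _)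
      _ ≤ (1 + C₀) * (‖A - B‖ * (C₀ * Real.exp (-lam * (t - s)))) := by
          have h2 := hB (t - s) (by linarith [hs.2] : (0:ℝ) ≤ t - s)
          have h3 := mul_le_mul_of_nonneg_left h2 (norm_nonneg (A - B))
          exact mul_le_mul (hA s hs.1) h3 (by positivity) (by linarith)
      _ = c * Real.exp (-lam * (t - s)) := by rw [hc]; ring
  have hnorm : ‖exp (t • A) - exp (t • B)‖
      ≤ ∫ s in (0:ℝ)..t, c * Real.exp (-lam * (t - s)) := by
    rw [duhamel_eq]
    refine (intervalIntegral.norm_integral_le_integral_norm ht).trans ?_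
    refine intervalIntegral.integral_mono_on ht (hcont.norm.intervalIntegrable 0 t)
      ((Continuous.intervalIntegrable (by continuity) 0 t)) hbd
  refine hnorm.trans ?_
  rw [intervalIntegral.integral_const_mul]
  calc c * ∫ s in (0:ℝ)..t, Real.exp (-lam * (t - s)) ≤ c * (1 / lam) := by
        gcongr
        · exact integral_exp_kernel hlam t
      _ = (1 + C₀) * C₀ / lam * ‖A - B‖ := by rw [hc]; ring

end PoissonAux

lemma integral_Ioi_exp_neg {b : ℝ} (hb : 0 < b) :
    ∫ t in Set.Ioi (0:ℝ), Real.exp (-b * t) = 1 / b := by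
  have hderiv : ∀ x ∈ Set.Ici (0:ℝ), HasDerivAt (fun u : ℝ => -(Real.exp (-b * u) / b))
      (Real.exp (-b * x)) x := by
    intro x _
    have h1 : HasDerivAt (fun u : ℝ => -b * u) (-b) x := by
      simpa using (hasDerivAt_id x).const_mul (-b)
    have h2 := (Real.hasDerivAt_exp (-b * x)).comp x h1
    have h3 := (h2.div_const b).neg
    convert h3 using 1 <;> first | rfl | rw [mul_neg, neg_div, neg_neg, mul_div_assoc, div_self hb.ne', mul_one]
  have hint := exp_neg_integrableOn_Ioi 0 hb
  have htend : Filter.Tendsto (fun u : ℝ => -(Real.exp (-b * u) / b)) Filter.atTop (nhds 0) := by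
    have hbu : Filter.Tendsto (fun u : ℝ => b * u) Filter.atTop Filter.atTop :=
      Filter.Tendsto.const_mul_atTop hb Filter.tendsto_id
    have h1 : Filter.Tendsto (fun u : ℝ => Real.exp (-(b * u))) Filter.atTop (nhds 0) :=
      Real.tendsto_exp_atBot.comp (Filter.tendsto_neg_atTop_atBot.comp hbu)
    have h2 := (h1.div_const b).neg
    simpa [neg_mul] using h2
  have hval := MeasureTheory.integral_Ioi_of_hasDerivAt_of_tendsto' hderiv hint htend
  rw [hval]
  simp [Real.exp_zero]

/-- Lipschitz-type estimate for the solution of the Poisson equation: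
`‖Φ(x,·) − Φ(y,·)‖_∞ ≤ C(‖F(x,·)‖_∞ ‖Q(x) − Q(y)‖_ℓ + ‖F(x,·) − F(y,·)‖_∞)`
with `C = C(C₀, λ)`. -/
theorem poisson_solution_lipschitz_bound (C₀ lam : ℝ) (hC₀ : 0 < C₀) (hlam : 0 < lam) :
    ∃ C > 0, ∀ (n m : ℕ) (Q : EuclideanSpace ℝ (Fin n) → Matrix (Fin m) (Fin m) ℝ)
      (μ : EuclideanSpace ℝ (Fin n) → Fin m → ℝ)
      (F : EuclideanSpace ℝ (Fin n) → Fin m → EuclideanSpace ℝ (Fin n)),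
      (∀ x i j, i ≠ j → 0 ≤ Q x i j) →
      (∀ x i, ∑ j, Q x i j = 0) →
      (∀ x i, 0 < μ x i) →
      (∀ x, ∑ i, μ x i = 1) →
      (∀ x j, ∑ i, μ x i * Q x i j = 0) →
      (∀ x i (t : ℝ), 0 ≤ t →
        ∑ j, |NormedSpace.exp (t • Q x) i j - μ x j| ≤ C₀ * Real.exp (-lam * t)) →
      -- central condition
      (∀ x, ∑ i, μ x i • F x i = 0) →
      ∀ x y : EuclideanSpace ℝ (Fin n),
        (⨆ i, ‖poissonSol Q F x i - poissonSol Q F y i‖)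
          ≤ C * ((⨆ i, ‖F x i‖) * lnorm (Q x - Q y) + ⨆ i, ‖F x i - F y i‖) := by

  set K : ℝ := (1 + C₀) * C₀ / lam with hK
  have hKpos : 0 < K := by positivity
  refine ⟨8 * C₀ ^ 2 * (1 + C₀) / lam ^ 2 + C₀ / lam + 1, by positivity, ?_⟩
  intro n m Q μ F hQpos hQrow hμpos hμsum hμinv herg hcent x y
  set C : ℝ := 8 * C₀ ^ 2 * (1 + C₀) / lam ^ 2 + C₀ / lam + 1 with hC
  have hCpos : 0 < C := by rw [hC]; positivity
  -- basic matrix facts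
  have h1 : ∀ (z : EuclideanSpace ℝ (Fin n)) (t : ℝ) (i : Fin m),
      ∑ k, NormedSpace.exp (t • Q z) i k = 1 := by
    intro z t i
    have hv : (t • Q z).mulVec (fun _ => (1:ℝ)) = 0 := by
      ext k
      simp only [Matrix.mulVec, dotProduct, Matrix.smul_apply, smul_eq_mul, mul_one,
        Pi.zero_apply]
      rw [← Finset.mul_sum, hQrow z k, mul_zero]
    have h := congrFun (exp_mulVec_eq hv) i
    simpa [Matrix.mulVec, dotProduct] using h
  have h2 : ∀ (z : EuclideanSpace ℝ (Fin n)) (t : ℝ) (j : Fin m),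
      ∑ k, μ z k * NormedSpace.exp (t • Q z) k j = μ z j := by
    intro z t j
    have hv : Matrix.vecMul (μ z) (t • Q z) = 0 := by
      ext k
      simp only [Matrix.vecMul, dotProduct, Matrix.smul_apply, smul_eq_mul, Pi.zero_apply]
      calc ∑ i, μ z i * (t * Q z i k) = t * ∑ i, μ z i * Q z i k := by
            rw [Finset.mul_sum]; exact Finset.sum_congr rfl fun i _ => by ring
        _ = 0 := by rw [hμinv z k, mul_zero]
    have h := congrFun (exp_vecMul_eq hv) j
    simpa [Matrix.vecMul, dotProduct] using h
  have hPz : ∀ (z : EuclideanSpace ℝ (Fin n)) (t : ℝ),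
      NormedSpace.exp (t • Q z) * Matrix.of (fun _ j => μ z j) = Matrix.of (fun _ j => μ z j) := by
    intro z t
    ext i j
    simp only [Matrix.mul_apply, Matrix.of_apply]
    rw [← Finset.sum_mul, h1 z t i, one_mul]
  have hzP : ∀ (z : EuclideanSpace ℝ (Fin n)) (t : ℝ),
      (Matrix.of (fun _ j => μ z j) : Matrix (Fin m) (Fin m) ℝ) * NormedSpace.exp (t • Q z)
        = Matrix.of (fun _ j => μ z j) := by
    intro z t
    ext i j
    simp only [Matrix.mul_apply, Matrix.of_apply]
    exact h2 z t j
  have hPiPi : ∀ (z : EuclideanSpace ℝ (Fin n)),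
      (Matrix.of (fun _ j => μ z j) : Matrix (Fin m) (Fin m) ℝ) * Matrix.of (fun _ j => μ z j)
        = Matrix.of (fun _ j => μ z j) := by
    intro z
    ext i j
    simp only [Matrix.mul_apply, Matrix.of_apply]
    rw [← Finset.sum_mul, hμsum z, one_mul]
  have hPi1 : ∀ (z : EuclideanSpace ℝ (Fin n)),
      lnorm (Matrix.of (fun _ j => μ z j) : Matrix (Fin m) (Fin m) ℝ) ≤ 1 := by
    intro z
    refine lnorm_le _ zero_le_one fun i => ?_
    simp only [Matrix.of_apply]
    rw [Finset.sum_congr rfl fun j _ => abs_of_pos (hμpos z j), hμsum z]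
  have hRz : ∀ (z : EuclideanSpace ℝ (Fin n)) (t : ℝ), 0 ≤ t →
      lnorm (NormedSpace.exp (t • Q z) - Matrix.of (fun _ j => μ z j))
        ≤ C₀ * Real.exp (-lam * t) := by
    intro z t ht
    refine lnorm_le _ (by positivity) fun i => ?_
    simpa [Matrix.sub_apply, Matrix.of_apply] using herg z i t ht
  have hPC : ∀ (z : EuclideanSpace ℝ (Fin n)) (t : ℝ), 0 ≤ t →
      lnorm (NormedSpace.exp (t • Q z)) ≤ 1 + C₀ := by
    intro z t ht
    have h := lnorm_add_le (NormedSpace.exp (t • Q z) - Matrix.of (fun _ j => μ z j))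
      (Matrix.of (fun _ j => μ z j))
    rw [sub_add_cancel] at h
    have he : Real.exp (-lam * t) ≤ 1 := Real.exp_le_one_iff.2 (by nlinarith)
    have hr := hRz z t ht
    have hp := hPi1 z
    nlinarith [Real.exp_pos (-lam * t)]
  have hsq : ∀ (z : EuclideanSpace ℝ (Fin n)) (s : ℝ),
      (NormedSpace.exp (s • Q z) - Matrix.of (fun _ j => μ z j))
        * (NormedSpace.exp (s • Q z) - Matrix.of (fun _ j => μ z j))
        = NormedSpace.exp ((s + s) • Q z) - Matrix.of (fun _ j => μ z j) := by
    intro z s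
    have hexp2 : NormedSpace.exp ((s + s) • Q z)
        = NormedSpace.exp (s • Q z) * NormedSpace.exp (s • Q z) := by
      rw [add_smul]
      exact Matrix.exp_add_of_commute _ _ (Commute.refl _)
    calc (NormedSpace.exp (s • Q z) - Matrix.of (fun _ j => μ z j))
          * (NormedSpace.exp (s • Q z) - Matrix.of (fun _ j => μ z j))
        = NormedSpace.exp (s • Q z) * NormedSpace.exp (s • Q z)
          - NormedSpace.exp (s • Q z) * Matrix.of (fun _ j => μ z j)
          - (Matrix.of (fun _ j => μ z j) * NormedSpace.exp (s • Q z)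
            - Matrix.of (fun _ j => μ z j) * Matrix.of (fun _ j => μ z j)) := by
          rw [sub_mul, mul_sub, mul_sub]
      _ = NormedSpace.exp ((s + s) • Q z) - Matrix.of (fun _ j => μ z j) := by
          rw [hPz z s, hzP z s, hPiPi z, ← hexp2]; abel
  have hD : ∀ t : ℝ, 0 ≤ t →
      lnorm (NormedSpace.exp (t • Q x) - NormedSpace.exp (t • Q y))
        ≤ K * lnorm (Q x - Q y) := by
    intro t ht
    have hABP : (Q x - Q y) * Matrix.of (fun _ j => μ y j) = 0 := by
      ext i j
      simp only [Matrix.mul_apply, Matrix.sub_apply, Matrix.of_apply, Matrix.zero_apply]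
      rw [← Finset.sum_mul, Finset.sum_sub_distrib, hQrow x i, hQrow y i]
      simp
    have := duhamel_bound (Q x) (Q y) (Matrix.of fun _ j => μ y j) C₀ lam hC₀ hlam
      (fun s hs => hPC x s hs) (fun s hs => hRz y s hs) hABP t ht
    rw [hK]
    exact this
  have hPid : lnorm ((Matrix.of (fun _ j => μ x j) : Matrix (Fin m) (Fin m) ℝ)
      - Matrix.of (fun _ j => μ y j)) ≤ K * lnorm (Q x - Q y) := by
    have hev : ∀ t : ℝ, 0 ≤ t →
        lnorm ((Matrix.of (fun _ j => μ x j) : Matrix (Fin m) (Fin m) ℝ)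
          - Matrix.of (fun _ j => μ y j))
          ≤ K * lnorm (Q x - Q y) + 2 * C₀ * Real.exp (-lam * t) := by
      intro t ht
      have hid : (Matrix.of (fun _ j => μ x j) : Matrix (Fin m) (Fin m) ℝ)
          - Matrix.of (fun _ j => μ y j)
          = -(NormedSpace.exp (t • Q x) - Matrix.of (fun _ j => μ x j))
            + ((NormedSpace.exp (t • Q x) - NormedSpace.exp (t • Q y))
              + (NormedSpace.exp (t • Q y) - Matrix.of (fun _ j => μ y j))) := by abel
      rw [hid]
      refine (lnorm_add_le _ _).trans ?_
      rw [lnorm_neg]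
      have e1 := hRz x t ht
      have e2 := hD t ht
      have e3 := hRz y t ht
      have e4 := lnorm_add_le (NormedSpace.exp (t • Q x) - NormedSpace.exp (t • Q y))
        (NormedSpace.exp (t • Q y) - Matrix.of (fun _ j => μ y j))
      linarith
    have h1' : Filter.Tendsto (fun t : ℝ => Real.exp (-lam * t)) Filter.atTop (nhds 0) := by
      have hbu : Filter.Tendsto (fun u : ℝ => lam * u) Filter.atTop Filter.atTop :=
        Filter.Tendsto.const_mul_atTop hlam Filter.tendsto_id
      have := Real.tendsto_exp_atBot.comp (Filter.tendsto_neg_atTop_atBot.comp hbu)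
      simpa only [Function.comp_def, neg_mul] using this
    have hlim : Filter.Tendsto
        (fun t : ℝ => K * lnorm (Q x - Q y) + 2 * C₀ * Real.exp (-lam * t))
        Filter.atTop (nhds (K * lnorm (Q x - Q y))) := by
      have h2' := h1'.const_mul (2 * C₀)
      have h3' := (tendsto_const_nhds
        (x := K * lnorm (Q x - Q y)) (f := Filter.atTop)).add h2'
      simpa using h3'
    exact ge_of_tendsto hlim (Filter.eventually_atTop.2 ⟨0, fun t ht => hev t ht⟩)
  have hδ0 : 0 ≤ lnorm (Q x - Q y) := lnorm_nonneg _
  have hE : ∀ t : ℝ, 0 ≤ t →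
      lnorm ((NormedSpace.exp (t • Q x) - Matrix.of (fun _ j => μ x j))
          - (NormedSpace.exp (t • Q y) - Matrix.of (fun _ j => μ y j)))
        ≤ 4 * C₀ * K * lnorm (Q x - Q y) * Real.exp (-(lam / 2) * t) := by
    intro t ht
    have hs0 : (0:ℝ) ≤ t / 2 := by linarith
    have hdiffhalf : lnorm ((NormedSpace.exp ((t/2) • Q x) - Matrix.of (fun _ j => μ x j))
        - (NormedSpace.exp ((t/2) • Q y) - Matrix.of (fun _ j => μ y j)))
        ≤ 2 * K * lnorm (Q x - Q y) := by
      refine (lnorm_sub_sub _ _ _ _).trans ?_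
      have := hD (t/2) hs0
      linarith [hPid]
    have htt : t / 2 + t / 2 = t := by ring
    have hidA : NormedSpace.exp (t • Q x) - Matrix.of (fun _ j => μ x j)
        = (NormedSpace.exp ((t/2) • Q x) - Matrix.of (fun _ j => μ x j))
          * (NormedSpace.exp ((t/2) • Q x) - Matrix.of (fun _ j => μ x j)) := by
      rw [hsq x (t/2), htt]
    have hidB : NormedSpace.exp (t • Q y) - Matrix.of (fun _ j => μ y j)
        = (NormedSpace.exp ((t/2) • Q y) - Matrix.of (fun _ j => μ y j))
          * (NormedSpace.exp ((t/2) • Q y) - Matrix.of (fun _ j => μ y j)) := by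
      rw [hsq y (t/2), htt]
    set R1 := NormedSpace.exp ((t/2) • Q x) - Matrix.of (fun _ j => μ x j) with hR1
    set R2 := NormedSpace.exp ((t/2) • Q y) - Matrix.of (fun _ j => μ y j) with hR2
    rw [hidA, hidB]
    have hident : R1 * R1 - R2 * R2 = (R1 - R2) * R1 + R2 * (R1 - R2) := by noncomm_ring
    rw [hident]
    have b2 := hRz x (t/2) hs0
    have b3 := hRz y (t/2) hs0
    have n1 := lnorm_nonneg (R1 - R2)
    have n2 := lnorm_nonneg R1
    have n3 := lnorm_nonneg R2
    have h2Kδ : (0:ℝ) ≤ 2 * K * lnorm (Q x - Q y) :=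
      mul_nonneg (mul_nonneg (by norm_num) hKpos.le) hδ0
    have hee : -lam * (t/2) = -(lam/2) * t := by ring
    calc lnorm ((R1 - R2) * R1 + R2 * (R1 - R2))
        ≤ lnorm ((R1 - R2) * R1) + lnorm (R2 * (R1 - R2)) := lnorm_add_le _ _
      _ ≤ lnorm (R1 - R2) * lnorm R1 + lnorm R2 * lnorm (R1 - R2) :=
          add_le_add (lnorm_mul_le _ _) (lnorm_mul_le _ _)
      _ ≤ (2 * K * lnorm (Q x - Q y)) * (C₀ * Real.exp (-lam * (t/2)))
          + (C₀ * Real.exp (-lam * (t/2))) * (2 * K * lnorm (Q x - Q y)) :=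
          add_le_add (mul_le_mul hdiffhalf b2 n2 h2Kδ)
            (mul_le_mul b3 hdiffhalf n1 (by positivity))
      _ = 4 * C₀ * K * lnorm (Q x - Q y) * Real.exp (-(lam / 2) * t) := by
          rw [hee]; ring
  -- vector-valued part
  set Fmax := ⨆ i, ‖F x i‖ with hFmax
  set Dmax := ⨆ i, ‖F x i - F y i‖ with hDmax
  have hFmax0 : 0 ≤ Fmax := Real.iSup_nonneg fun i => norm_nonneg _
  have hDmax0 : 0 ≤ Dmax := Real.iSup_nonneg fun i => norm_nonneg _
  have hFle : ∀ j, ‖F x j‖ ≤ Fmax := fun j =>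
    le_ciSup (f := fun j => ‖F x j‖) (Set.Finite.bddAbove (Set.finite_range _)) j
  have hDle : ∀ j, ‖F x j - F y j‖ ≤ Dmax := fun j =>
    le_ciSup (f := fun j => ‖F x j - F y j‖) (Set.Finite.bddAbove (Set.finite_range _)) j
  have hFyle : ∀ j, ‖F y j‖ ≤ Fmax + Dmax := by
    intro j
    have hj : F y j = F x j - (F x j - F y j) := by abel
    rw [hj]
    exact (norm_sub_le _ _).trans (add_le_add (hFle j) (hDle j))
  have hkey : ∀ (M : Matrix (Fin m) (Fin m) ℝ) (w : Fin m → EuclideanSpace ℝ (Fin n)) (W : ℝ),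
      0 ≤ W → (∀ j, ‖w j‖ ≤ W) → ∀ i, ‖∑ j, M i j • w j‖ ≤ lnorm M * W := by
    intro M w W hW hw i
    calc ‖∑ j, M i j • w j‖ ≤ ∑ j, ‖M i j • w j‖ := norm_sum_le _ _
      _ = ∑ j, |M i j| * ‖w j‖ := by simp [norm_smul, Real.norm_eq_abs]
      _ ≤ ∑ j, |M i j| * W :=
          Finset.sum_le_sum fun j _ => mul_le_mul_of_nonneg_left (hw j) (abs_nonneg _)
      _ = (∑ j, |M i j|) * W := by rw [Finset.sum_mul]
      _ ≤ lnorm M * W := mul_le_mul_of_nonneg_right (row_abs_sum_le_lnorm M i) hW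
  set Wx : ℝ → Fin m → EuclideanSpace ℝ (Fin n) := fun t i =>
    ∑ j, (NormedSpace.exp (t • Q x) - Matrix.of (fun _ j => μ x j)
      : Matrix (Fin m) (Fin m) ℝ) i j • F x j with hWxdef
  set Wy : ℝ → Fin m → EuclideanSpace ℝ (Fin n) := fun t i =>
    ∑ j, (NormedSpace.exp (t • Q y) - Matrix.of (fun _ j => μ y j)
      : Matrix (Fin m) (Fin m) ℝ) i j • F y j with hWydef
  have hWxcont : ∀ i, Continuous fun t => Wx t i := by
    intro i
    simp only [hWxdef, Matrix.sub_apply]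
    refine continuous_finset_sum _ fun j _ => ?_
    exact ((exp_entry_continuous (Q x) i j).sub continuous_const).smul continuous_const
  have hWycont : ∀ i, Continuous fun t => Wy t i := by
    intro i
    simp only [hWydef, Matrix.sub_apply]
    refine continuous_finset_sum _ fun j _ => ?_
    exact ((exp_entry_continuous (Q y) i j).sub continuous_const).smul continuous_const
  have hWxbound : ∀ (i : Fin m) (t : ℝ), 0 ≤ t →
      ‖Wx t i‖ ≤ C₀ * Real.exp (-lam * t) * Fmax := by
    intro i t ht
    simp only [hWxdef]
    refine (hkey _ (F x) Fmax hFmax0 hFle i).trans ?_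
    exact mul_le_mul_of_nonneg_right (hRz x t ht) hFmax0
  have hWybound : ∀ (i : Fin m) (t : ℝ), 0 ≤ t →
      ‖Wy t i‖ ≤ C₀ * Real.exp (-lam * t) * (Fmax + Dmax) := by
    intro i t ht
    simp only [hWydef]
    refine (hkey _ (F y) (Fmax + Dmax) (by linarith) hFyle i).trans ?_
    exact mul_le_mul_of_nonneg_right (hRz y t ht) (by linarith)
  have hexpint : ∀ b : ℝ, 0 < b →
      IntegrableOn (fun t : ℝ => Real.exp (-b * t)) (Set.Ici 0) volume := fun b hb =>
    (integrableOn_Ici_iff_integrableOn_Ioi (by simp)).2 (exp_neg_integrableOn_Ioi 0 hb)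
  have hWxint : ∀ i, IntegrableOn (fun t => Wx t i) (Set.Ici 0) volume := by
    intro i
    refine Integrable.mono' (((hexpint lam hlam).const_mul C₀).mul_const Fmax)
      (hWxcont i).aestronglyMeasurable ?_
    refine (ae_restrict_iff' measurableSet_Ici).2 (ae_of_all _ fun t ht => ?_)
    simpa [mul_assoc] using hWxbound i t ht
  have hWyint : ∀ i, IntegrableOn (fun t => Wy t i) (Set.Ici 0) volume := by
    intro i
    refine Integrable.mono' (((hexpint lam hlam).const_mul C₀).mul_const (Fmax + Dmax))
      (hWycont i).aestronglyMeasurable ?_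
    refine (ae_restrict_iff' measurableSet_Ici).2 (ae_of_all _ fun t ht => ?_)
    simpa [mul_assoc] using hWybound i t ht
  have hsolx : ∀ i, poissonSol Q F x i = ∫ t in Set.Ici (0:ℝ), Wx t i := by
    intro i
    ext l
    have hc : (∑ j, μ x j * F x j l) = 0 := by
      have h0 := congrArg (fun v => EuclideanSpace.proj (𝕜 := ℝ) l v) (hcent x)
      simpa [map_sum] using h0
    have hptw : ∀ t : ℝ, (NormedSpace.exp (t • Q x)).mulVec (fun j => F x j l) i
        = EuclideanSpace.proj (𝕜 := ℝ) l (Wx t i) := by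
      intro t
      simp only [hWxdef]
      simp only [map_sum, _root_.map_smul, PiLp.proj_apply, smul_eq_mul,
        Matrix.mulVec, dotProduct, Matrix.sub_apply, Matrix.of_apply, sub_mul]
      rw [Finset.sum_sub_distrib, hc, sub_zero]
    calc poissonSol Q F x i l
        = ∫ t in Set.Ici (0:ℝ), (NormedSpace.exp (t • Q x)).mulVec (fun j => F x j l) i := rfl
      _ = ∫ t in Set.Ici (0:ℝ), EuclideanSpace.proj (𝕜 := ℝ) l (Wx t i) := by
          simp only [hptw]
      _ = EuclideanSpace.proj (𝕜 := ℝ) l (∫ t in Set.Ici (0:ℝ), Wx t i) :=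
          ContinuousLinearMap.integral_comp_comm _ (hWxint i)
      _ = (∫ t in Set.Ici (0:ℝ), Wx t i) l := by simp [PiLp.proj_apply]
  have hsoly : ∀ i, poissonSol Q F y i = ∫ t in Set.Ici (0:ℝ), Wy t i := by
    intro i
    ext l
    have hc : (∑ j, μ y j * F y j l) = 0 := by
      have h0 := congrArg (fun v => EuclideanSpace.proj (𝕜 := ℝ) l v) (hcent y)
      simpa [map_sum] using h0
    have hptw : ∀ t : ℝ, (NormedSpace.exp (t • Q y)).mulVec (fun j => F y j l) i
        = EuclideanSpace.proj (𝕜 := ℝ) l (Wy t i) := by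
      intro t
      simp only [hWydef]
      simp only [map_sum, _root_.map_smul, PiLp.proj_apply, smul_eq_mul,
        Matrix.mulVec, dotProduct, Matrix.sub_apply, Matrix.of_apply, sub_mul]
      rw [Finset.sum_sub_distrib, hc, sub_zero]
    calc poissonSol Q F y i l
        = ∫ t in Set.Ici (0:ℝ), (NormedSpace.exp (t • Q y)).mulVec (fun j => F y j l) i := rfl
      _ = ∫ t in Set.Ici (0:ℝ), EuclideanSpace.proj (𝕜 := ℝ) l (Wy t i) := by
          simp only [hptw]
      _ = EuclideanSpace.proj (𝕜 := ℝ) l (∫ t in Set.Ici (0:ℝ), Wy t i) :=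
          ContinuousLinearMap.integral_comp_comm _ (hWyint i)
      _ = (∫ t in Set.Ici (0:ℝ), Wy t i) l := by simp [PiLp.proj_apply]
  have hsplit : ∀ (t : ℝ) (i : Fin m), Wx t i - Wy t i
      = (∑ j, ((NormedSpace.exp (t • Q x) - Matrix.of (fun _ j => μ x j))
            - (NormedSpace.exp (t • Q y) - Matrix.of (fun _ j => μ y j))
            : Matrix (Fin m) (Fin m) ℝ) i j • F x j)
        + ∑ j, (NormedSpace.exp (t • Q y) - Matrix.of (fun _ j => μ y j)
            : Matrix (Fin m) (Fin m) ℝ) i j • (F x j - F y j) := by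
    intro t i
    simp only [hWxdef, hWydef]
    rw [← Finset.sum_sub_distrib, ← Finset.sum_add_distrib]
    refine Finset.sum_congr rfl fun j _ => ?_
    simp only [Matrix.sub_apply, sub_smul, smul_sub]
    abel
  set c1 : ℝ := 4 * C₀ * K * lnorm (Q x - Q y) * Fmax with hc1
  set c2 : ℝ := C₀ * Dmax with hc2
  have hc10 : 0 ≤ c1 := by
    rw [hc1]
    have : (0:ℝ) ≤ 4 * C₀ * K := by positivity
    exact mul_nonneg (mul_nonneg this hδ0) hFmax0
  have hc20 : 0 ≤ c2 := by rw [hc2]; exact mul_nonneg hC₀.le hDmax0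
  have hdiffbd : ∀ (i : Fin m) (t : ℝ), 0 ≤ t → ‖Wx t i - Wy t i‖
      ≤ c1 * Real.exp (-(lam / 2) * t) + c2 * Real.exp (-lam * t) := by
    intro i t ht
    rw [hsplit t i]
    refine (norm_add_le _ _).trans ?_
    have b1 := (hkey _ (F x) Fmax hFmax0 hFle i).trans
      (mul_le_mul_of_nonneg_right (hE t ht) hFmax0)
    have b2 := (hkey _ (fun j => F x j - F y j) Dmax hDmax0 hDle i).trans
      (mul_le_mul_of_nonneg_right (hRz y t ht) hDmax0)
    calc _ ≤ 4 * C₀ * K * lnorm (Q x - Q y) * Real.exp (-(lam / 2) * t) * Fmax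
          + C₀ * Real.exp (-lam * t) * Dmax := add_le_add b1 b2
      _ = c1 * Real.exp (-(lam / 2) * t) + c2 * Real.exp (-lam * t) := by
          rw [hc1, hc2]; ring
  have hintdiff : ∀ i, ‖poissonSol Q F x i - poissonSol Q F y i‖
      ≤ c1 * (1 / (lam / 2)) + c2 * (1 / lam) := by
    intro i
    rw [hsolx i, hsoly i, ← integral_sub (hWxint i) (hWyint i)]
    refine (norm_integral_le_integral_norm _).trans ?_
    have hbint : IntegrableOn
        (fun t : ℝ => c1 * Real.exp (-(lam / 2) * t) + c2 * Real.exp (-lam * t))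
        (Set.Ici 0) volume :=
      ((hexpint (lam/2) (by linarith)).const_mul c1).add ((hexpint lam hlam).const_mul c2)
    have step1 : ∫ t in Set.Ici (0:ℝ), ‖Wx t i - Wy t i‖
        ≤ ∫ t in Set.Ici (0:ℝ),
            (c1 * Real.exp (-(lam / 2) * t) + c2 * Real.exp (-lam * t)) :=
      setIntegral_mono_on (((hWxint i).sub (hWyint i)).norm) hbint measurableSet_Ici
        (fun t ht => hdiffbd i t ht)
    refine step1.trans ?_
    rw [integral_add ((hexpint (lam/2) (by linarith)).const_mul c1)
      ((hexpint lam hlam).const_mul c2)]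
    have i1 : ∫ t in Set.Ici (0:ℝ), c1 * Real.exp (-(lam / 2) * t) = c1 * (1 / (lam / 2)) := by
      rw [MeasureTheory.integral_Ici_eq_integral_Ioi, integral_const_mul,
        integral_Ioi_exp_neg (by linarith)]
    have i2 : ∫ t in Set.Ici (0:ℝ), c2 * Real.exp (-lam * t) = c2 * (1 / lam) := by
      rw [MeasureTheory.integral_Ici_eq_integral_Ioi, integral_const_mul,
        integral_Ioi_exp_neg hlam]
    rw [i1, i2]
  have harith : c1 * (1 / (lam / 2)) + c2 * (1 / lam)
      ≤ C * (Fmax * lnorm (Q x - Q y) + Dmax) := by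
    have ha : 8 * C₀ ^ 2 * (1 + C₀) / lam ^ 2 ≤ C := by
      rw [hC]
      have : (0:ℝ) < C₀ / lam := by positivity
      linarith
    have hb : C₀ / lam ≤ C := by
      rw [hC]
      have : (0:ℝ) < 8 * C₀ ^ 2 * (1 + C₀) / lam ^ 2 := by positivity
      linarith
    have hX : 0 ≤ Fmax * lnorm (Q x - Q y) := mul_nonneg hFmax0 hδ0
    calc c1 * (1 / (lam / 2)) + c2 * (1 / lam)
        = (8 * C₀ ^ 2 * (1 + C₀) / lam ^ 2) * (Fmax * lnorm (Q x - Q y))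
          + (C₀ / lam) * Dmax := by
          rw [hc1, hc2, hK]
          field_simp
          ring
      _ ≤ C * (Fmax * lnorm (Q x - Q y)) + C * Dmax :=
          add_le_add (mul_le_mul_of_nonneg_right ha hX)
            (mul_le_mul_of_nonneg_right hb hDmax0)
      _ = C * (Fmax * lnorm (Q x - Q y) + Dmax) := by ring
  refine Real.iSup_le (fun i => (hintdiff i).trans harith) ?_
  exact mul_nonneg hCpos.le
    (add_nonneg (mul_nonneg hFmax0 hδ0) hDmax0)
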